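/- Let n ≥ 3 and let S be a set of transpositions generating S_n such that the Cayley graph Cay(S_n, S) is normal (i.e., the image of the right regular representation is a normal subgroup of Aut(Cay(S_n, S))). Then the subgroup λ(Aut(T(S))) = { λ_a : a ∈ Aut(T(S)) } of Aut(Cay(S_n, S)), where λ_a : x ↦ a⁻¹ * x, is a normal subgroup of Aut(Cay(S_n, S)). -/

import Mathlib

open Equiv

/-- The Cayley graph of `Sₙ = Perm (Fin n)` with connection set `S`:
vertices `h, g` are adjacent iff `g * h⁻¹ ∈ S` (for a symmetric identity-free
set `S`, such as a set of transpositions, `fromRel` yields exactly this relation). -/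
def Cay (n : ℕ) (S : Set (Equiv.Perm (Fin n))) : SimpleGraph (Equiv.Perm (Fin n)) :=
  SimpleGraph.fromRel (fun h g => g * h⁻¹ ∈ S)

/-- The transposition graph `T(S)` of `S`: vertices `i, j ∈ Fin n` are adjacent
iff the transposition `swap i j ∈ S`. -/
def TransGraph (n : ℕ) (S : Set (Equiv.Perm (Fin n))) : SimpleGraph (Fin n) :=
  SimpleGraph.fromRel (fun i j => Equiv.swap i j ∈ S)

/-- The automorphism group of a graph, as a subgroup of the symmetric group on
its vertex set. -/
def graphAut {V : Type*} (G : SimpleGraph V) : Subgroup (Equiv.Perm V) where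
  carrier := {f | ∀ x y, G.Adj (f x) (f y) ↔ G.Adj x y}
  one_mem' := by intro x y; simp
  mul_mem' := by
    intro a b ha hb x y
    simp only [Equiv.Perm.mul_apply]
    rw [ha, hb]
  inv_mem' := by
    intro a ha x y
    rw [← ha (a⁻¹ x) (a⁻¹ y)]
    simp

/-- The image `R(Sₙ)` of the right regular representation of `Sₙ` inside `Sym(Sₙ)`:
all permutations of the form `x ↦ x * a`. -/
def Rrep (n : ℕ) : Subgroup (Equiv.Perm (Equiv.Perm (Fin n))) where
  carrier := {f | ∃ a : Equiv.Perm (Fin n), f = Equiv.mulRight a}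
  one_mem' := ⟨1, by ext x; simp⟩
  mul_mem' := by
    rintro _ _ ⟨a, rfl⟩ ⟨b, rfl⟩
    exact ⟨b * a, by ext x; simp [mul_assoc]⟩
  inv_mem' := by
    rintro _ ⟨a, rfl⟩
    exact ⟨a⁻¹, by ext x; simp⟩

/-- The image `λ(Sₙ)` of the left regular representation of `Sₙ` inside `Sym(Sₙ)`:
all permutations of the form `x ↦ b⁻¹ * x`. -/
def LrepAll (n : ℕ) : Subgroup (Equiv.Perm (Equiv.Perm (Fin n))) where
  carrier := {f | ∃ b : Equiv.Perm (Fin n), f = Equiv.mulLeft b⁻¹}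
  one_mem' := ⟨1, by ext x; simp⟩
  mul_mem' := by
    rintro _ _ ⟨a, rfl⟩ ⟨b, rfl⟩
    exact ⟨b * a, by ext x; simp [mul_assoc]⟩
  inv_mem' := by
    rintro _ ⟨a, rfl⟩
    exact ⟨a⁻¹, by ext x; simp⟩

/-- The subgroup `λ(Aut(T(S))) = { x ↦ a⁻¹ * x : a ∈ Aut(T(S)) }` of `Sym(Sₙ)`. -/
def Lrep (n : ℕ) (S : Set (Equiv.Perm (Fin n))) :
    Subgroup (Equiv.Perm (Equiv.Perm (Fin n))) where
  carrier := {f | ∃ a ∈ graphAut (TransGraph n S), f = Equiv.mulLeft a⁻¹}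
  one_mem' := ⟨1, one_mem _, by ext x; simp⟩
  mul_mem' := by
    rintro _ _ ⟨a, ha, rfl⟩ ⟨b, hb, rfl⟩
    exact ⟨b * a, mul_mem hb ha, by ext x; simp [mul_assoc]⟩
  inv_mem' := by
    rintro _ ⟨a, ha, rfl⟩
    exact ⟨a⁻¹, inv_mem ha, by ext x; simp⟩


section Aux

open Equiv

variable {n : ℕ} {S : Set (Equiv.Perm (Fin n))}

lemma inv_mem_S (hS : ∀ s ∈ S, Equiv.Perm.IsSwap s) {s} (hs : s ∈ S) : s⁻¹ ∈ S := by
  obtain ⟨i, j, hij, rfl⟩ := hS s hs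
  rwa [Equiv.swap_inv]

lemma ne_one_of_mem_S (hS : ∀ s ∈ S, Equiv.Perm.IsSwap s) {s} (hs : s ∈ S) : s ≠ 1 := by
  obtain ⟨i, j, hij, rfl⟩ := hS s hs
  intro h
  have := congrArg (fun p => p i) h
  simp [Equiv.swap_apply_left] at this
  exact hij this.symm

lemma cay_adj (hS : ∀ s ∈ S, Equiv.Perm.IsSwap s) {h g : Equiv.Perm (Fin n)} :
    (Cay n S).Adj h g ↔ h ≠ g ∧ g * h⁻¹ ∈ S := by
  unfold Cay
  rw [SimpleGraph.fromRel_adj]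
  constructor
  · rintro ⟨hne, hmem | hmem⟩
    · exact ⟨hne, hmem⟩
    · refine ⟨hne, ?_⟩
      have := inv_mem_S hS hmem
      simpa [mul_inv_rev] using this
  · rintro ⟨hne, hmem⟩; exact ⟨hne, Or.inl hmem⟩

lemma trans_adj {i j : Fin n} :
    (TransGraph n S).Adj i j ↔ i ≠ j ∧ Equiv.swap i j ∈ S := by
  unfold TransGraph
  rw [SimpleGraph.fromRel_adj]
  constructor
  · rintro ⟨hne, hmem | hmem⟩
    · exact ⟨hne, hmem⟩
    · exact ⟨hne, by rwa [Equiv.swap_comm]⟩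
  · rintro ⟨hne, hmem⟩; exact ⟨hne, Or.inl hmem⟩

lemma mulRight_mem_aut (a : Equiv.Perm (Fin n)) :
    Equiv.mulRight a ∈ graphAut (Cay n S) := by
  intro x y
  unfold Cay
  rw [SimpleGraph.fromRel_adj, SimpleGraph.fromRel_adj]
  have h1 : (y * a) * (x * a)⁻¹ = y * x⁻¹ := by group
  have h2 : (x * a) * (y * a)⁻¹ = x * y⁻¹ := by group
  have h3 : (x * a ≠ y * a) ↔ x ≠ y := (mul_left_injective a).ne_iff
  simp only [Equiv.coe_mulRight, h1, h2, h3]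

lemma conj_mem_of_transAut {a : Equiv.Perm (Fin n)} (ha : a ∈ graphAut (TransGraph n S))
    (hS : ∀ s ∈ S, Equiv.Perm.IsSwap s) {s} (hs : s ∈ S) : a * s * a⁻¹ ∈ S := by
  obtain ⟨i, j, hij, rfl⟩ := hS s hs
  rw [← Equiv.swap_apply_apply]
  have h1 : (TransGraph n S).Adj i j := trans_adj.mpr ⟨hij, hs⟩
  have h2 := (ha i j).mpr h1
  exact (trans_adj.mp h2).2

end Aux

/-- Let `n ≥ 3` and let `S` be a set of transpositions generating `Sₙ`
such that `Cay(Sₙ, S)` is normal (the image of the right regular representation is a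
normal subgroup of `Aut(Cay(Sₙ, S))`). Then the subgroup
`λ(Aut(T(S))) = { λ_a : a ∈ Aut(T(S)) }` (with `λ_a : x ↦ a⁻¹ * x`) is a normal
subgroup of `Aut(Cay(Sₙ, S))`. -/
theorem lrep_normal_in_aut_cayley (n : ℕ) (hn : 3 ≤ n) (S : Set (Equiv.Perm (Fin n)))
    (hS : ∀ s ∈ S, Equiv.Perm.IsSwap s)
    (hgen : Subgroup.closure S = ⊤)
    (hnormal : ((Rrep n).subgroupOf (graphAut (Cay n S))).Normal) :
    ((Lrep n S).subgroupOf (graphAut (Cay n S))).Normal := by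
  constructor
  intro u hu F
  rw [Subgroup.mem_subgroupOf] at hu ⊢
  obtain ⟨a, ha, hu_eq⟩ := hu
  set f : Equiv.Perm (Equiv.Perm (Fin n)) := (F : Equiv.Perm (Equiv.Perm (Fin n))) with hf_def
  have hf : ∀ x y, (Cay n S).Adj (f x) (f y) ↔ (Cay n S).Adj x y := F.2
  have hfi : ∀ x y, (Cay n S).Adj (f⁻¹ x) (f⁻¹ y) ↔ (Cay n S).Adj x y := by
    have := (inv_mem F.2 : f⁻¹ ∈ graphAut (Cay n S))
    exact this
  set c : Equiv.Perm (Fin n) := f 1 with hc_def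
  -- key relation from normality of Rrep
  have key : ∀ (x g : Equiv.Perm (Fin n)), f (x * g) = f x * c⁻¹ * f g := by
    intro x g
    have hmem : (⟨Equiv.mulRight g, mulRight_mem_aut g⟩ : graphAut (Cay n S)) ∈
        (Rrep n).subgroupOf (graphAut (Cay n S)) := by
      rw [Subgroup.mem_subgroupOf]
      exact ⟨g, rfl⟩
    have hconj := hnormal.conj_mem _ hmem F
    rw [Subgroup.mem_subgroupOf] at hconj
    obtain ⟨g', hg'⟩ := hconj
    have hcoe : (((F * ⟨Equiv.mulRight g, mulRight_mem_aut g⟩ * F⁻¹ : graphAut (Cay n S))) :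
        Equiv.Perm (Equiv.Perm (Fin n))) = f * Equiv.mulRight g * f⁻¹ := rfl
    rw [hcoe] at hg'
    have h1 : f (x * g) = f x * g' := by
      have := congrArg (fun p : Equiv.Perm (Equiv.Perm (Fin n)) => p (f x)) hg'
      simpa [Equiv.Perm.mul_apply, Equiv.coe_mulRight] using this
    have h2 : f g = c * g' := by
      have := congrArg (fun p : Equiv.Perm (Equiv.Perm (Fin n)) => p (f 1)) hg'
      simpa [Equiv.Perm.mul_apply, Equiv.coe_mulRight] using this
    have h3 : g' = c⁻¹ * f g := by rw [h2]; group
    rw [h1, h3]; group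
  -- the induced map φ is multiplicative
  set φ : Equiv.Perm (Fin n) → Equiv.Perm (Fin n) := fun x => f x * c⁻¹ with hφ_def
  have hmul : ∀ x y, φ (x * y) = φ x * φ y := by
    intro x y
    simp only [hφ_def, key]
    group
  have hφone : φ 1 = 1 := by simp [hφ_def, hc_def]
  have hφinv : ∀ x, φ x⁻¹ = (φ x)⁻¹ := by
    intro x
    have : φ x⁻¹ * φ x = 1 := by rw [← hmul]; simp [hφone]
    exact eq_inv_of_mul_eq_one_left this
  -- inverse map
  set φ' : Equiv.Perm (Fin n) → Equiv.Perm (Fin n) := fun z => f⁻¹ (z * c) with hφ'_def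
  have hφφ' : ∀ z, φ (φ' z) = z := by
    intro z
    simp only [hφ_def, hφ'_def]
    rw [show f (f⁻¹ (z * c)) = z * c from f.apply_symm_apply _]
    group
  -- φ maps S into S
  have hφS : ∀ s ∈ S, φ s ∈ S := by
    intro s hs
    have hadj : (Cay n S).Adj 1 s := (cay_adj hS).mpr
      ⟨fun h => ne_one_of_mem_S hS hs h.symm, by simpa using hs⟩
    have := (hf 1 s).mpr hadj
    rw [cay_adj hS] at this
    exact this.2
  -- φ' maps S into S
  have hφ'S : ∀ s ∈ S, φ' s ∈ S := by
    intro s hs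
    have hadj : (Cay n S).Adj c (s * c) := (cay_adj hS).mpr
      ⟨fun h => ne_one_of_mem_S hS hs (by
          have := congrArg (fun z => z * c⁻¹) h
          simpa using this.symm), by
        have : s * c * c⁻¹ = s := by group
        rw [this]; exact hs⟩
    have h2 := (hfi c (s * c)).mpr hadj
    have h3 : f⁻¹ c = 1 := by
      rw [hc_def]; exact f.symm_apply_apply 1
    rw [h3, cay_adj hS] at h2
    simpa [hφ'_def] using h2.2
  -- b := φ a is an automorphism of the transposition graph
  set b : Equiv.Perm (Fin n) := φ a with hb_def
  have hconjb : ∀ s ∈ S, b * s * b⁻¹ ∈ S := by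
    intro s hs
    have hs' : φ' s ∈ S := hφ'S s hs
    have hcs : a * φ' s * a⁻¹ ∈ S := conj_mem_of_transAut ha hS hs'
    have := hφS _ hcs
    rwa [hmul, hmul, hφinv, hφφ'] at this
  have hconjb' : ∀ s ∈ S, b⁻¹ * s * b ∈ S := by
    intro s hs
    have hs' : φ' s ∈ S := hφ'S s hs
    have hcs : a⁻¹ * φ' s * (a⁻¹)⁻¹ ∈ S := conj_mem_of_transAut (inv_mem ha) hS hs'
    rw [inv_inv] at hcs
    have := hφS _ hcs
    rwa [hmul, hmul, hφinv, hφφ'] at this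
  have hb : b ∈ graphAut (TransGraph n S) := by
    intro x y
    rw [trans_adj, trans_adj]
    constructor
    · rintro ⟨hne, hsw⟩
      refine ⟨fun h => hne (by rw [h]), ?_⟩
      have := hconjb' _ hsw
      have e : Equiv.swap x y = b⁻¹ * Equiv.swap (b x) (b y) * b⁻¹⁻¹ := by
        rw [← Equiv.swap_apply_apply]
        simp
      rw [inv_inv] at e
      rwa [e]
    · rintro ⟨hne, hsw⟩
      refine ⟨b.injective.ne hne, ?_⟩
      have := hconjb _ hsw
      rwa [← Equiv.swap_apply_apply] at this
  -- conclude
  refine ⟨b, hb, ?_⟩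
  have hcoe : ((F * u * F⁻¹ : graphAut (Cay n S)) : Equiv.Perm (Equiv.Perm (Fin n)))
      = f * (u : Equiv.Perm (Equiv.Perm (Fin n))) * f⁻¹ := rfl
  rw [hcoe, hu_eq]
  apply Equiv.ext
  intro x
  simp only [Equiv.Perm.mul_apply, Equiv.coe_mulLeft]
  have h1 : f (a⁻¹ * f⁻¹ x) = φ (a⁻¹ * f⁻¹ x) * c := by
    simp only [hφ_def]; group
  rw [h1, hmul, hφinv]
  have h2 : φ (f⁻¹ x) = x * c⁻¹ := by
    simp only [hφ_def]; rw [show f (f⁻¹ x) = x from f.apply_symm_apply _]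
  rw [h2, hb_def]
  group
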